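/- Let T be a tree, X ⊆ V(T), and let P̃ be a partition of X that is the projection onto X of a partition of V(T) crossed by at most c edges of T. Then P̃ is also the projection onto X of a partition of V(proj(T,X)) crossed by at most c edges of proj(T,X). -/

import Mathlib

/-- One step of the projection procedure: either delete a leaf not in `X`,
or smooth (suppress) a degree-2 vertex not in `X`. -/
inductive ProjStep {V : Type} (X : Set V) : SimpleGraph V → SimpleGraph V → Prop
  | deleteLeaf (G : SimpleGraph V) (v : V) (hv : v ∉ X)
      (hdeg : (G.neighborSet v).ncard = 1) :
      ProjStep X G (SimpleGraph.fromEdgeSet (G.edgeSet \ {e | v ∈ e}))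
  | smooth (G : SimpleGraph V) (v a b : V) (hv : v ∉ X)
      (hdeg : (G.neighborSet v).ncard = 2) (ha : G.Adj v a) (hb : G.Adj v b) (hab : a ≠ b) :
      ProjStep X G (SimpleGraph.fromEdgeSet ((G.edgeSet \ {e | v ∈ e}) ∪ {s(a, b)}))

/-- The set of edges of `G` crossing the partition (setoid) `R`. -/
def crossingEdges {V : Type} (G : SimpleGraph V) (R : Setoid V) : Set (Sym2 V) :=
  {e | e ∈ G.edgeSet ∧ ∃ a b : V, e = s(a, b) ∧ ¬ R.r a b}

lemma step_ncard_le {V : Type} [Fintype V] (X : Set V) {G G' : SimpleGraph V}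
    (h : ProjStep X G G') (R : Setoid V) :
    (crossingEdges G' R).ncard ≤ (crossingEdges G R).ncard := by
  cases h with
  | deleteLeaf v hv hdeg =>
    apply Set.ncard_le_ncard _ (Set.toFinite _)
    rintro e ⟨he, hcr⟩
    rw [SimpleGraph.edgeSet_fromEdgeSet] at he
    exact ⟨he.1.1, hcr⟩
  | smooth v a b hv hdeg ha hb hab =>
    by_cases hRab : R.r a b
    · apply Set.ncard_le_ncard _ (Set.toFinite _)
      rintro e ⟨he, x, y, hxy, hR⟩
      rw [SimpleGraph.edgeSet_fromEdgeSet] at he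
      rcases he.1 with h1 | h1
      · exact ⟨h1.1, x, y, hxy, hR⟩
      · exfalso
        apply hR
        simp only [Set.mem_singleton_iff] at h1
        rw [h1, Sym2.eq_iff] at hxy
        rcases hxy with ⟨rfl, rfl⟩ | ⟨rfl, rfl⟩
        · exact hRab
        · exact R.symm hRab
    · -- one of s(v,a), s(v,b) crosses R in G
      have hva : G.Adj v a := ha
      have key : ∃ w, s(v, w) ∈ crossingEdges G R ∧ v ∈ (s(v, w) : Sym2 V) := by
        by_cases hRva : R.r v a
        · refine ⟨b, ⟨(G.mem_edgeSet.mpr hb), v, b, rfl, ?_⟩, by simp⟩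
          intro hvb
          exact hRab (R.trans (R.symm hRva) hvb)
        · exact ⟨a, ⟨(G.mem_edgeSet.mpr ha), v, a, rfl, hRva⟩, by simp⟩
      obtain ⟨w, hw, hwv⟩ := key
      have hsub : crossingEdges (SimpleGraph.fromEdgeSet
          ((G.edgeSet \ {e | v ∈ e}) ∪ {s(a, b)})) R ⊆
          insert s(a, b) (crossingEdges G R \ {s(v, w)}) := by
        rintro e ⟨he, x, y, hxy, hR⟩
        rw [SimpleGraph.edgeSet_fromEdgeSet] at he
        rcases he.1 with h1 | h1
        · right
          refine ⟨⟨h1.1, x, y, hxy, hR⟩, ?_⟩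
          intro heq
          rw [Set.mem_singleton_iff] at heq
          apply h1.2
          rw [heq]; exact hwv
        · left; exact h1
      calc (crossingEdges (SimpleGraph.fromEdgeSet
              ((G.edgeSet \ {e | v ∈ e}) ∪ {s(a, b)})) R).ncard
          ≤ (insert s(a, b) (crossingEdges G R \ {s(v, w)})).ncard :=
            Set.ncard_le_ncard hsub (Set.toFinite _)
        _ ≤ (crossingEdges G R \ {s(v, w)}).ncard + 1 :=
            Set.ncard_insert_le _ _
        _ = (crossingEdges G R).ncard - 1 + 1 := by
            rw [Set.ncard_diff_singleton_of_mem hw]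
        _ ≤ (crossingEdges G R).ncard := by
            have : 1 ≤ (crossingEdges G R).ncard :=
              (Set.ncard_pos (Set.toFinite _)).mpr ⟨_, hw⟩
            omega

lemma reach_ncard_le {V : Type} [Fintype V] (X : Set V) {G G' : SimpleGraph V}
    (h : Relation.ReflTransGen (ProjStep X) G G') (R : Setoid V) :
    (crossingEdges G' R).ncard ≤ (crossingEdges G R).ncard := by
  induction h with
  | refl => exact le_rfl
  | tail _ hstep ih => exact le_trans (step_ncard_le X hstep R) ih

/-- If a partition `P̃` of `X` is the projection onto `X` of a partition of the vertices of a
tree `T` crossed by at most `c` edges of `T`, then `P̃` is also the projection onto `X` of a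
partition of the vertices of `proj(T,X)` crossed by at most `c` edges of `proj(T,X)`.
Partitions are encoded as setoids, and `T''` is the projection `proj(T,X)` (a normal form of
the projection rewriting procedure). -/
theorem stmt_5 {V : Type} [Fintype V] (X : Set V) (T T'' : SimpleGraph V) (hT : T.IsTree)
    (hreach : Relation.ReflTransGen (ProjStep X) T T'')
    (hnf : ∀ H, ¬ ProjStep X T'' H)
    (c : ℕ) (R : Setoid V) (hc : (crossingEdges T R).ncard ≤ c) :
    ∃ R' : Setoid V, (crossingEdges T'' R').ncard ≤ c ∧
      ∀ x ∈ X, ∀ y ∈ X, (R'.r x y ↔ R.r x y) := by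
  exact ⟨R, le_trans (reach_ncard_le X hreach R) hc, fun x _ y _ => Iff.rfl⟩
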